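/- Let N ∈ ℕ with N ≥ 1, let L ∈ Matrix (Fin N) (Fin N) ℂ satisfy L·𝟙 = 0, let ℓ₁ be the first row of L and 𝟙ℓ₁ the rank-one matrix with every row equal to ℓ₁, and let K ∈ ℝ with K ≠ 0. Then the spectrum (set of eigenvalues) of the matrix I + (1/K)·(𝟙ℓ₁ − L) equals the image of the spectrum of L under the map λ ↦ 1 − λ/K. -/

import Mathlib

open Matrix
/-- If `L · 𝟙 = 0` and `K ≠ 0`, then the spectrum of `I + (1/K)(𝟙ℓ₁ − L)` equals the image
of the spectrum of `L` under `λ ↦ 1 − λ/K`. -/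
theorem stmt_2 (N : ℕ) (hN : 1 ≤ N) (L : Matrix (Fin N) (Fin N) ℂ)
    (hL : L *ᵥ (fun _ => (1 : ℂ)) = 0) (K : ℝ) (hK : K ≠ 0) :
    spectrum ℂ ((1 : Matrix (Fin N) (Fin N) ℂ) +
        (1 / (K : ℂ)) • (Matrix.of (fun _ j => L ⟨0, hN⟩ j) - L)) =
      (fun z : ℂ => 1 - z / (K : ℂ)) '' spectrum ℂ L := by
  have hKc : (K : ℂ) ≠ 0 := Complex.ofReal_ne_zero.mpr hK
  set i0 : Fin N := ⟨0, hN⟩ with hi0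
  set ℓ : Fin N → ℂ := L i0 with hℓ
  set E : Matrix (Fin N) (Fin N) ℂ := Matrix.of (fun _ j => ℓ j) with hE
  have hLr : ∀ i, L i ⬝ᵥ (fun _ => (1:ℂ)) = 0 := fun i => congrFun hL i
  have hone : (fun _ => (1:ℂ)) ≠ (0 : Fin N → ℂ) := by
    intro h; have := congrFun h i0; simp at this
  have hEv : ∀ v : Fin N → ℂ, E *ᵥ v = fun _ => ℓ ⬝ᵥ v := by
    intro v; funext i; simp [Matrix.mulVec, E]
  have hℓ1 : ℓ ⬝ᵥ (fun _ => (1:ℂ)) = 0 := hLr i0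
  have hE1 : E *ᵥ (fun _ => (1:ℂ)) = 0 := by
    rw [hEv]; funext i; simpa using hℓ1
  have key : ∀ w : ℂ,
      ((w • (1 : Matrix (Fin N) (Fin N) ℂ) + L - E).det = 0 ↔
        (w • (1 : Matrix (Fin N) (Fin N) ℂ) + L).det = 0) := by
    intro w
    have hB1 : (w • (1 : Matrix (Fin N) (Fin N) ℂ) + L) *ᵥ (fun _ => (1:ℂ))
        = fun _ => w := by
      rw [add_mulVec, hL, smul_mulVec, one_mulVec]
      funext i; simp
    by_cases hw : w = 0
    · subst hw
      simp only [zero_smul, zero_add]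
      constructor <;> intro _
      · rw [← Matrix.exists_mulVec_eq_zero_iff]
        exact ⟨_, hone, hL⟩
      · apply Matrix.det_eq_zero_of_row_eq_zero i0
        intro j; simp [E, hℓ]
    · constructor
      · intro h
        rw [← Matrix.exists_mulVec_eq_zero_iff] at h ⊢
        obtain ⟨y, hy0, hy⟩ := h
        have hBy : (w • (1 : Matrix (Fin N) (Fin N) ℂ) + L) *ᵥ y = fun _ => ℓ ⬝ᵥ y := by
          rw [sub_mulVec, sub_eq_zero] at hy
          rw [hy, hEv]
        refine ⟨y - (ℓ ⬝ᵥ y / w) • (fun (_ : Fin N) => (1:ℂ)), fun h0 => ?_, ?_⟩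
        · apply hy0
          rw [sub_eq_zero] at h0
          have hs : ℓ ⬝ᵥ y = 0 := by
            conv_lhs => rw [h0]
            simp [dotProduct_smul, hℓ1]
          rw [h0, hs]
          simp
        · rw [mulVec_sub, hBy, mulVec_smul, hB1]
          funext i
          simp only [Pi.sub_apply, Pi.smul_apply, Pi.zero_apply, smul_eq_mul]
          field_simp
          ring
      · intro h
        rw [← Matrix.exists_mulVec_eq_zero_iff] at h ⊢
        obtain ⟨y, hy0, hy⟩ := h
        refine ⟨y + (ℓ ⬝ᵥ y / w) • (fun (_ : Fin N) => (1:ℂ)), fun h0 => ?_, ?_⟩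
        · apply hy0
          have h0' : y = -((ℓ ⬝ᵥ y / w) • (fun (_ : Fin N) => (1:ℂ))) := by
            rwa [add_eq_zero_iff_eq_neg] at h0
          have hs : ℓ ⬝ᵥ y = 0 := by
            conv_lhs => rw [h0']
            simp [dotProduct_smul, hℓ1]
          rw [h0', hs]
          simp
        · rw [sub_mulVec, mulVec_add, mulVec_add, hy, mulVec_smul, hB1, hEv, hEv]
          funext i
          simp only [Pi.add_apply, Pi.sub_apply, Pi.zero_apply, Pi.smul_apply, zero_add,
            smul_eq_mul, dotProduct_add, dotProduct_smul, hℓ1]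
          field_simp
          ring
  have mem_iff : ∀ (A : Matrix (Fin N) (Fin N) ℂ) (z : ℂ),
      z ∈ spectrum ℂ A ↔ (z • (1 : Matrix (Fin N) (Fin N) ℂ) - A).det = 0 := by
    intro A z
    rw [spectrum.mem_iff, Matrix.isUnit_iff_isUnit_det, isUnit_iff_ne_zero, not_not,
      Algebra.algebraMap_eq_smul_one]
  ext z
  set A : Matrix (Fin N) (Fin N) ℂ :=
    (1 : Matrix (Fin N) (Fin N) ℂ) + (1 / (K : ℂ)) • (E - L) with hA
  have h1 : (K : ℂ) • (z • (1 : Matrix (Fin N) (Fin N) ℂ) - A)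
      = ((K : ℂ) * (z - 1)) • (1 : Matrix (Fin N) (Fin N) ℂ) + L - E := by
    ext i j
    by_cases h : i = j <;>
      simp [hA, h, Matrix.one_apply, Matrix.smul_apply, Matrix.sub_apply, Matrix.add_apply] <;>
      field_simp <;> ring
  have hneg : ((K : ℂ) * (1 - z)) • (1 : Matrix (Fin N) (Fin N) ℂ) - L
      = -(((K : ℂ) * (z - 1)) • (1 : Matrix (Fin N) (Fin N) ℂ) + L) := by
    ext i j
    by_cases h : i = j <;> simp [h, Matrix.one_apply] <;> ring
  have hchain : z ∈ spectrum ℂ A ↔ ((K : ℂ) * (1 - z)) ∈ spectrum ℂ L := by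
    rw [mem_iff, mem_iff]
    have hLHS : (z • (1 : Matrix (Fin N) (Fin N) ℂ) - A).det = 0 ↔
        (((K : ℂ) * (z - 1)) • (1 : Matrix (Fin N) (Fin N) ℂ) + L - E).det = 0 := by
      constructor
      · intro h
        rw [← h1, Matrix.det_smul, h, mul_zero]
      · intro h
        rw [← h1, Matrix.det_smul] at h
        rcases mul_eq_zero.mp h with h' | h'
        · exact absurd h' (pow_ne_zero _ hKc)
        · exact h'
    have hRHS : (((K : ℂ) * (1 - z)) • (1 : Matrix (Fin N) (Fin N) ℂ) - L).det = 0 ↔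
        (((K : ℂ) * (z - 1)) • (1 : Matrix (Fin N) (Fin N) ℂ) + L).det = 0 := by
      rw [hneg, Matrix.det_neg]
      constructor
      · intro h
        rcases mul_eq_zero.mp h with h' | h'
        · exact absurd h' (pow_ne_zero _ (by norm_num))
        · exact h'
      · intro h
        rw [h, mul_zero]
    rw [hLHS, hRHS]
    exact key _
  rw [hchain]
  constructor
  · intro h
    refine ⟨(K : ℂ) * (1 - z), h, ?_⟩
    field_simp
    ring
  · rintro ⟨lam, hlam, rfl⟩
    convert hlam using 2
    field_simp
    ring
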